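/- Jumps of the cdf bounds at the switching quantiles. Assume overlap and 0 < c̲ < p₁ < c̄ < 1. Writing F(y−) for the left limit of a monotone function F at y, the following two-sided bounds hold: (p₁/c̄)·P(Y = Q̄₁ ∣ X=1) ≤ F̄₁(Q̄₁) − F̄₁(Q̄₁−) ≤ (p₁/c̲)·P(Y = Q̄₁ ∣ X=1); (p₁/c̄)·P(Y = Q̲₁ ∣ X=1) ≤ F̲₁(Q̲₁) − F̲₁(Q̲₁−) ≤ (p₁/c̲)·P(Y = Q̲₁ ∣ X=1); (p₀/(1−c̲))·P(Y = Q̄₀ ∣ X=0) ≤ F̄₀(Q̄₀) − F̄₀(Q̄₀−) ≤ (p₀/(1−c̄))·P(Y = Q̄₀ ∣ X=0); and (p₀/(1−c̲))·P(Y = Q̲₀ ∣ X=0) ≤ F̲₀(Q̲₀) − F̲₀(Q̲₀−) ≤ (p₀/(1−c̄))·P(Y = Q̲₀ ∣ X=0). Consequently, F̄₁ is continuous at Q̄₁ if and only if P(Y = Q̄₁ ∣ X=1) = 0, F̲₁ is continuous at Q̲₁ if and only if P(Y = Q̲₁ ∣ X=1) = 0, F̄₀ is continuous at Q̄₀ if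 and only if P(Y = Q̄₀ ∣ X=0) = 0, and F̲₀ is continuous at Q̲₀ if and only if P(Y = Q̲₀ ∣ X=0) = 0. -/

import Mathlib

open MeasureTheory ProbabilityTheory Set Filter Function Topology

noncomputable section

private lemma min_jump_bounds (a b a' b' : ℝ) (h1 : a' ≤ a) (h2 : b' ≤ b) :
    min (a - a') (b - b') ≤ min a b - min a' b' ∧
      min a b - min a' b' ≤ max (a - a') (b - b') := by
  constructor
  · have hA : min a' b' + min (a - a') (b - b') ≤ a := by
      have := min_le_left a' b'; have := min_le_left (a - a') (b - b'); linarith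
    have hB : min a' b' + min (a - a') (b - b') ≤ b := by
      have := min_le_right a' b'; have := min_le_right (a - a') (b - b'); linarith
    have := le_min hA hB; linarith
  · rcases le_total a' b' with h | h
    · have := min_le_left a b; have := le_max_left (a - a') (b - b')
      rw [min_eq_left h]; linarith
    · have := min_le_right a b; have := le_max_right (a - a') (b - b')
      rw [min_eq_right h]; linarith

private lemma max_jump_bounds (a b a' b' : ℝ) (h1 : a' ≤ a) (h2 : b' ≤ b) :
    min (a - a') (b - b') ≤ max a b - max a' b' ∧
      max a b - max a' b' ≤ max (a - a') (b - b') := by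
  constructor
  · rcases le_total a' b' with h | h
    · have := le_max_right a b; have := min_le_right (a - a') (b - b')
      rw [max_eq_right h]; linarith
    · have := le_max_left a b; have := min_le_left (a - a') (b - b')
      rw [max_eq_left h]; linarith
  · have hA : a - max a' b' ≤ max (a - a') (b - b') := by
      have := le_max_left a' b'; have := le_max_left (a - a') (b - b'); linarith
    have hB : b - max a' b' ≤ max (a - a') (b - b') := by
      have := le_max_right a' b'; have := le_max_right (a - a') (b - b'); linarith
    rcases max_cases a b with ⟨he, _⟩ | ⟨he, _⟩ <;> rw [he]
    · exact hA
    · exact hB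

private lemma cond_cdf_props {Ω : Type*} [MeasurableSpace Ω]
    (P : Measure Ω) [IsProbabilityMeasure P]
    (Z : Ω → ℝ) (hZ : Measurable Z) (S : Set Ω) (hS : MeasurableSet S)
    (p : ℝ) (hp : 0 < p) (G : ℝ → ℝ)
    (hG : ∀ y, G y = (P {ω | Z ω ≤ y ∧ ω ∈ S}).toReal / p) (q : ℝ) :
    Monotone G ∧
      Tendsto G (𝓝[<] q) (𝓝 (G q - (P {ω | Z ω = q ∧ ω ∈ S}).toReal / p)) ∧
      Tendsto G (𝓝[>] q) (𝓝 (G q)) := by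
  set A : ℝ → Set Ω := fun y => {ω | Z ω ≤ y ∧ ω ∈ S} with hA
  have hAm : ∀ y, MeasurableSet (A y) := fun y => (hZ measurableSet_Iic).inter hS
  have hmono : Monotone G := by
    intro x y hxy
    rw [hG, hG]
    have hle : P (A x) ≤ P (A y) := measure_mono fun ω hω => ⟨hω.1.trans hxy, hω.2⟩
    have := ENNReal.toReal_mono (measure_ne_top P _) hle
    rw [div_le_div_iff₀ hp hp]
    nlinarith
  have hΔsplit : (P (A q)).toReal
      = (P {ω | Z ω < q ∧ ω ∈ S}).toReal + (P {ω | Z ω = q ∧ ω ∈ S}).toReal := by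
    have hdisj : Disjoint {ω | Z ω < q ∧ ω ∈ S} {ω | Z ω = q ∧ ω ∈ S} :=
      Set.disjoint_left.2 fun ω h1 h2 => absurd h2.1 (ne_of_lt h1.1)
    have hunion : A q = {ω | Z ω < q ∧ ω ∈ S} ∪ {ω | Z ω = q ∧ ω ∈ S} := by
      ext ω
      simp only [hA, Set.mem_setOf_eq, Set.mem_union]
      constructor
      · rintro ⟨h1, h2⟩
        rcases lt_or_eq_of_le h1 with h | h
        · exact Or.inl ⟨h, h2⟩
        · exact Or.inr ⟨h, h2⟩
      · rintro (⟨h1, h2⟩ | ⟨h1, h2⟩)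
        · exact ⟨h1.le, h2⟩
        · exact ⟨h1.le, h2⟩
    rw [hunion, measure_union hdisj ((hZ (measurableSet_singleton q)).inter hS),
      ENNReal.toReal_add (measure_ne_top P _) (measure_ne_top P _)]
  constructor
  · exact hmono
  constructor
  · set u : ℕ → ℝ := fun n => q - 1 / (n + 1) with hu
    have hu_lt : ∀ n, u n < q := fun n => by
      have h0 : (0:ℝ) < 1 / ((n:ℝ) + 1) := by positivity
      simp only [hu]; linarith
    have hu_tend : Tendsto u atTop (𝓝[<] q) := by
      apply tendsto_nhdsWithin_of_tendsto_nhds_of_eventually_within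
      · have h1 : Tendsto (fun n : ℕ => 1 / ((n:ℝ) + 1)) atTop (𝓝 0) :=
          tendsto_one_div_add_atTop_nhds_zero_nat
        have h2 : Tendsto u atTop (𝓝 (q - 0)) := tendsto_const_nhds.sub h1
        simpa using h2
      · exact Eventually.of_forall fun n => hu_lt n
    have hmonoAu : Monotone fun n => A (u n) := by
      intro n m hnm ω hω
      refine ⟨hω.1.trans ?_, hω.2⟩
      have h3 : 1 / ((m:ℝ) + 1) ≤ 1 / ((n:ℝ) + 1) := by
        apply one_div_le_one_div_of_le (by positivity)
        have : (n:ℝ) ≤ (m:ℝ) := Nat.cast_le.2 hnm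
        linarith
      simp only [hu]; linarith
    have hUnion : (⋃ n, A (u n)) = {ω | Z ω < q ∧ ω ∈ S} := by
      ext ω
      simp only [Set.mem_iUnion, hA, Set.mem_setOf_eq]
      constructor
      · rintro ⟨n, h1, h2⟩
        exact ⟨lt_of_le_of_lt h1 (hu_lt n), h2⟩
      · rintro ⟨h1, h2⟩
        obtain ⟨n, hn⟩ := exists_nat_one_div_lt (sub_pos.2 h1)
        exact ⟨n, by simp only [hu]; linarith, h2⟩
    have hmeas : Tendsto (fun n => (P (A (u n))).toReal) atTop
        (𝓝 (P {ω | Z ω < q ∧ ω ∈ S}).toReal) := by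
      have h4 := tendsto_measure_iUnion_atTop (μ := P) hmonoAu
      rw [hUnion] at h4
      exact (ENNReal.tendsto_toReal (measure_ne_top P _)).comp h4
    have hseq : Tendsto (fun n => G (u n)) atTop
        (𝓝 ((P {ω | Z ω < q ∧ ω ∈ S}).toReal / p)) := by
      simp only [hG]
      exact hmeas.div_const p
    have hLL : leftLim G q = (P {ω | Z ω < q ∧ ω ∈ S}).toReal / p :=
      tendsto_nhds_unique ((hmono.tendsto_leftLim q).comp hu_tend) hseq
    have heq : G q - (P {ω | Z ω = q ∧ ω ∈ S}).toReal / p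
        = (P {ω | Z ω < q ∧ ω ∈ S}).toReal / p := by
      rw [hG q]
      show (P (A q)).toReal / p - _ = _
      rw [hΔsplit]; ring
    rw [heq, ← hLL]
    exact hmono.tendsto_leftLim q
  · set u : ℕ → ℝ := fun n => q + 1 / (n + 1) with hu
    have hu_gt : ∀ n, q < u n := fun n => by
      have h0 : (0:ℝ) < 1 / ((n:ℝ) + 1) := by positivity
      simp only [hu]; linarith
    have hu_tend : Tendsto u atTop (𝓝[>] q) := by
      apply tendsto_nhdsWithin_of_tendsto_nhds_of_eventually_within
      · have h1 : Tendsto (fun n : ℕ => 1 / ((n:ℝ) + 1)) atTop (𝓝 0) :=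
          tendsto_one_div_add_atTop_nhds_zero_nat
        have h2 : Tendsto u atTop (𝓝 (q + 0)) := tendsto_const_nhds.add h1
        simpa using h2
      · exact Eventually.of_forall fun n => hu_gt n
    have hanti : Antitone fun n => A (u n) := by
      intro n m hnm ω hω
      refine ⟨hω.1.trans ?_, hω.2⟩
      have h3 : 1 / ((m:ℝ) + 1) ≤ 1 / ((n:ℝ) + 1) := by
        apply one_div_le_one_div_of_le (by positivity)
        have : (n:ℝ) ≤ (m:ℝ) := Nat.cast_le.2 hnm
        linarith
      simp only [hu]; linarith
    have hInter : (⋂ n, A (u n)) = A q := by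
      ext ω
      simp only [Set.mem_iInter, hA, Set.mem_setOf_eq]
      constructor
      · intro h
        refine ⟨?_, (h 0).2⟩
        by_contra hc
        push_neg at hc
        obtain ⟨n, hn⟩ := exists_nat_one_div_lt (sub_pos.2 hc)
        have h5 := (h n).1
        simp only [hu] at h5
        linarith
      · intro h n
        have h0 : (0:ℝ) < 1 / ((n:ℝ) + 1) := by positivity
        exact ⟨h.1.trans (by simp only [hu]; linarith), h.2⟩
    have hmeas0 := tendsto_measure_iInter_atTop (μ := P)
        (fun n => (hAm (u n)).nullMeasurableSet) hanti ⟨0, measure_ne_top P _⟩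
    rw [hInter] at hmeas0
    have hseq : Tendsto (fun n => G (u n)) atTop (𝓝 (G q)) := by
      have h6 : Tendsto (fun n => (P (A (u n))).toReal) atTop (𝓝 (P (A q)).toReal) :=
        (ENNReal.tendsto_toReal (measure_ne_top P _)).comp hmeas0
      have h7 := h6.div_const p
      simp only [hG]
      exact h7
    have hRL : rightLim G q = G q :=
      tendsto_nhds_unique ((hmono.tendsto_rightLim q).comp hu_tend) hseq
    rw [← hRL]
    exact hmono.tendsto_rightLim q

private lemma min_comp_jump (G : ℝ → ℝ) (hmono : Monotone G) (q δ : ℝ) (hδ : 0 ≤ δ)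
    (hl : Tendsto G (𝓝[<] q) (𝓝 (G q - δ)))
    (hr : Tendsto G (𝓝[>] q) (𝓝 (G q)))
    (a b c d : ℝ) (ha : 0 < a) (hc : 0 < c)
    (F : ℝ → ℝ) (hF : ∀ y, F y = min (a * G y + b) (c * G y + d)) :
    (min a c * δ ≤ F q - Function.leftLim F q ∧
      F q - Function.leftLim F q ≤ max a c * δ) ∧
      (ContinuousAt F q ↔ δ = 0) := by
  have hFmono : Monotone F := by
    intro x y hxy
    rw [hF, hF]
    have hg := hmono hxy
    exact min_le_min (by nlinarith) (by nlinarith)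
  have hlF : Tendsto F (𝓝[<] q) (𝓝 (min (a * (G q - δ) + b) (c * (G q - δ) + d))) := by
    have h1 : Tendsto (fun y => min (a * G y + b) (c * G y + d)) (𝓝[<] q)
        (𝓝 (min (a * (G q - δ) + b) (c * (G q - δ) + d))) :=
      Tendsto.min ((hl.const_mul a).add_const b) ((hl.const_mul c).add_const d)
    exact h1.congr fun y => (hF y).symm
  have hLL : Function.leftLim F q = min (a * (G q - δ) + b) (c * (G q - δ) + d) :=
    leftLim_eq_of_tendsto hlF
  have hbounds := min_jump_bounds (a * G q + b) (c * G q + d)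
      (a * (G q - δ) + b) (c * (G q - δ) + d) (by nlinarith) (by nlinarith)
  have e1 : a * G q + b - (a * (G q - δ) + b) = a * δ := by ring
  have e2 : c * G q + d - (c * (G q - δ) + d) = c * δ := by ring
  rw [e1, e2] at hbounds
  have hδmin : min (a * δ) (c * δ) = min a c * δ := by
    rcases le_total a c with h | h
    · rw [min_eq_left (by nlinarith), min_eq_left h]
    · rw [min_eq_right (by nlinarith), min_eq_right h]
  have hδmax : max (a * δ) (c * δ) = max a c * δ := by
    rcases le_total a c with h | h
    · rw [max_eq_right (by nlinarith), max_eq_right h]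
    · rw [max_eq_left (by nlinarith), max_eq_left h]
  have hjump : F q - Function.leftLim F q
      = min (a * G q + b) (c * G q + d) - min (a * (G q - δ) + b) (c * (G q - δ) + d) := by
    rw [hF q, hLL]
  constructor
  · exact ⟨by rw [hjump, ← hδmin]; exact hbounds.1, by rw [hjump, ← hδmax]; exact hbounds.2⟩
  · have hrF : Tendsto F (𝓝[>] q) (𝓝 (F q)) := by
      have h1 : Tendsto (fun y => min (a * G y + b) (c * G y + d)) (𝓝[>] q)
          (𝓝 (min (a * G q + b) (c * G q + d))) :=
        Tendsto.min ((hr.const_mul a).add_const b) ((hr.const_mul c).add_const d)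
      rw [hF q]
      exact h1.congr fun y => (hF y).symm
    have hRL : Function.rightLim F q = F q :=
      rightLim_eq_of_tendsto hrF
    rw [hFmono.continuousAt_iff_leftLim_eq_rightLim, hRL]
    constructor
    · intro h
      by_contra hne
      have hpos : 0 < δ := lt_of_le_of_ne hδ (Ne.symm hne)
      have hminpos : 0 < min a c := lt_min ha hc
      have h1 := hbounds.1
      rw [← hjump, h] at h1
      rw [hδmin] at h1
      nlinarith
    · intro h
      rw [hLL, hF q, h]
      norm_num
  
private lemma max_comp_jump (G : ℝ → ℝ) (hmono : Monotone G) (q δ : ℝ) (hδ : 0 ≤ δ)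
    (hl : Tendsto G (𝓝[<] q) (𝓝 (G q - δ)))
    (hr : Tendsto G (𝓝[>] q) (𝓝 (G q)))
    (a b c d : ℝ) (ha : 0 < a) (hc : 0 < c)
    (F : ℝ → ℝ) (hF : ∀ y, F y = max (a * G y + b) (c * G y + d)) :
    (min a c * δ ≤ F q - Function.leftLim F q ∧
      F q - Function.leftLim F q ≤ max a c * δ) ∧
      (ContinuousAt F q ↔ δ = 0) := by
  have hFmono : Monotone F := by
    intro x y hxy
    rw [hF, hF]
    have hg := hmono hxy
    exact max_le_max (by nlinarith) (by nlinarith)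
  have hlF : Tendsto F (𝓝[<] q) (𝓝 (max (a * (G q - δ) + b) (c * (G q - δ) + d))) := by
    have h1 : Tendsto (fun y => max (a * G y + b) (c * G y + d)) (𝓝[<] q)
        (𝓝 (max (a * (G q - δ) + b) (c * (G q - δ) + d))) :=
      Tendsto.max ((hl.const_mul a).add_const b) ((hl.const_mul c).add_const d)
    exact h1.congr fun y => (hF y).symm
  have hLL : Function.leftLim F q = max (a * (G q - δ) + b) (c * (G q - δ) + d) :=
    leftLim_eq_of_tendsto hlF
  have hbounds := max_jump_bounds (a * G q + b) (c * G q + d)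
      (a * (G q - δ) + b) (c * (G q - δ) + d) (by nlinarith) (by nlinarith)
  have e1 : a * G q + b - (a * (G q - δ) + b) = a * δ := by ring
  have e2 : c * G q + d - (c * (G q - δ) + d) = c * δ := by ring
  rw [e1, e2] at hbounds
  have hδmin : min (a * δ) (c * δ) = min a c * δ := by
    rcases le_total a c with h | h
    · rw [min_eq_left (by nlinarith), min_eq_left h]
    · rw [min_eq_right (by nlinarith), min_eq_right h]
  have hδmax : max (a * δ) (c * δ) = max a c * δ := by
    rcases le_total a c with h | h
    · rw [max_eq_right (by nlinarith), max_eq_right h]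
    · rw [max_eq_left (by nlinarith), max_eq_left h]
  have hjump : F q - Function.leftLim F q
      = max (a * G q + b) (c * G q + d) - max (a * (G q - δ) + b) (c * (G q - δ) + d) := by
    rw [hF q, hLL]
  constructor
  · exact ⟨by rw [hjump, ← hδmin]; exact hbounds.1, by rw [hjump, ← hδmax]; exact hbounds.2⟩
  · have hrF : Tendsto F (𝓝[>] q) (𝓝 (F q)) := by
      have h1 : Tendsto (fun y => max (a * G y + b) (c * G y + d)) (𝓝[>] q)
          (𝓝 (max (a * G q + b) (c * G q + d))) :=
        Tendsto.max ((hr.const_mul a).add_const b) ((hr.const_mul c).add_const d)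
      rw [hF q]
      exact h1.congr fun y => (hF y).symm
    have hRL : Function.rightLim F q = F q :=
      rightLim_eq_of_tendsto hrF
    rw [hFmono.continuousAt_iff_leftLim_eq_rightLim, hRL]
    constructor
    · intro h
      by_contra hne
      have hpos : 0 < δ := lt_of_le_of_ne hδ (Ne.symm hne)
      have hminpos : 0 < min a c := lt_min ha hc
      have h1 := hbounds.1
      rw [← hjump, h] at h1
      rw [hδmin] at h1
      nlinarith
    · intro h
      rw [hLL, hF q, h]
      norm_num

/-- **Jumps of the cdf bounds at the switching quantiles.**
Under overlap and `0 < c̲ < p₁ < c̄ < 1`, the jump of each cdf bound at its switching quantile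
is sandwiched between explicit multiples of the conditional point mass of `Y` there; hence each
bound is continuous at its switching quantile iff the corresponding conditional point mass
vanishes. -/
theorem cdf_bound_jumps_at_switching_quantiles
    {Ω : Type*} [MeasurableSpace Ω] (P : Measure Ω) [IsProbabilityMeasure P]
    (Y1 Y0 : Ω → ℝ) (X : Ω → Bool)
    (hY1 : Measurable Y1) (hY0 : Measurable Y0) (hX : Measurable X)
    (Y : Ω → ℝ) (hY : ∀ ω, Y ω = if X ω then Y1 ω else Y0 ω)
    (p1 p0 : ℝ) (hp1 : p1 = (P {ω | X ω = true}).toReal) (hp0 : p0 = 1 - p1)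
    (hov : 0 < p1 ∧ p1 < 1)
    (cl cu : ℝ) (hcl : 0 < cl) (hclp1 : cl < p1) (hp1cu : p1 < cu) (hcu : cu < 1)
    (G1 G0 : ℝ → ℝ)
    (hG1 : ∀ y, G1 y = (P {ω | Y ω ≤ y ∧ X ω = true}).toReal / p1)
    (hG0 : ∀ y, G0 y = (P {ω | Y ω ≤ y ∧ X ω = false}).toReal / p0)
    (Fu1 Fl1 Fu0 Fl0 : ℝ → ℝ)
    (hFu1 : ∀ y, Fu1 y = min (G1 y * p1 / cl) ((cu - p1) / cu + G1 y * p1 / cu))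
    (hFl1 : ∀ y, Fl1 y = max (G1 y * p1 / cu) ((cl - p1) / cl + G1 y * p1 / cl))
    (hFu0 : ∀ y, Fu0 y = min (G0 y * p0 / (1 - cu)) ((p1 - cl) / (1 - cl) + G0 y * p0 / (1 - cl)))
    (hFl0 : ∀ y, Fl0 y = max (G0 y * p0 / (1 - cl)) ((p1 - cu) / (1 - cu) + G0 y * p0 / (1 - cu)))
    -- thresholds and switching quantiles
    (τl1 τu1 τl0 τu0 Ql1 Qu1 Ql0 Qu0 : ℝ)
    (hτl1 : τl1 = (p1 - cl) * cu / (p1 * (cu - cl))) (hτu1 : τu1 = 1 - τl1)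
    (hQl1 : Ql1 = sInf {y : ℝ | τl1 ≤ G1 y}) (hQu1 : Qu1 = sInf {y : ℝ | τu1 ≤ G1 y})
    (hτl0 : τl0 = (cu - p1) * (1 - cl) / (p0 * (cu - cl))) (hτu0 : τu0 = 1 - τl0)
    (hQl0 : Ql0 = sInf {y : ℝ | τl0 ≤ G0 y}) (hQu0 : Qu0 = sInf {y : ℝ | τu0 ≤ G0 y}) :
    ((p1 / cu) * ((P {ω | Y ω = Qu1 ∧ X ω = true}).toReal / p1)
        ≤ Fu1 Qu1 - Function.leftLim Fu1 Qu1 ∧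
      Fu1 Qu1 - Function.leftLim Fu1 Qu1
        ≤ (p1 / cl) * ((P {ω | Y ω = Qu1 ∧ X ω = true}).toReal / p1)) ∧
    ((p1 / cu) * ((P {ω | Y ω = Ql1 ∧ X ω = true}).toReal / p1)
        ≤ Fl1 Ql1 - Function.leftLim Fl1 Ql1 ∧
      Fl1 Ql1 - Function.leftLim Fl1 Ql1
        ≤ (p1 / cl) * ((P {ω | Y ω = Ql1 ∧ X ω = true}).toReal / p1)) ∧
    ((p0 / (1 - cl)) * ((P {ω | Y ω = Qu0 ∧ X ω = false}).toReal / p0)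
        ≤ Fu0 Qu0 - Function.leftLim Fu0 Qu0 ∧
      Fu0 Qu0 - Function.leftLim Fu0 Qu0
        ≤ (p0 / (1 - cu)) * ((P {ω | Y ω = Qu0 ∧ X ω = false}).toReal / p0)) ∧
    ((p0 / (1 - cl)) * ((P {ω | Y ω = Ql0 ∧ X ω = false}).toReal / p0)
        ≤ Fl0 Ql0 - Function.leftLim Fl0 Ql0 ∧
      Fl0 Ql0 - Function.leftLim Fl0 Ql0
        ≤ (p0 / (1 - cu)) * ((P {ω | Y ω = Ql0 ∧ X ω = false}).toReal / p0)) ∧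
    (ContinuousAt Fu1 Qu1 ↔ (P {ω | Y ω = Qu1 ∧ X ω = true}).toReal / p1 = 0) ∧
    (ContinuousAt Fl1 Ql1 ↔ (P {ω | Y ω = Ql1 ∧ X ω = true}).toReal / p1 = 0) ∧
    (ContinuousAt Fu0 Qu0 ↔ (P {ω | Y ω = Qu0 ∧ X ω = false}).toReal / p0 = 0) ∧
    (ContinuousAt Fl0 Ql0 ↔ (P {ω | Y ω = Ql0 ∧ X ω = false}).toReal / p0 = 0) := by
  have hp1pos : 0 < p1 := hov.1
  have hp0pos : 0 < p0 := by rw [hp0]; linarith [hov.2]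
  have hclcu : cl ≤ cu := le_of_lt (hclp1.trans hp1cu)
  have hcupos : 0 < cu := hcl.trans_le hclcu
  have h1cl : 0 < 1 - cl := by linarith
  have h1cu : 0 < 1 - cu := by linarith
  have hYmeas : Measurable Y := by
    have hYe : Y = fun ω => if X ω = true then Y1 ω else Y0 ω := funext fun ω => hY ω
    rw [hYe]
    exact Measurable.ite (hX (measurableSet_singleton true)) hY1 hY0
  -- conditional cdf facts for arm 1
  have hprops1u := cond_cdf_props P Y hYmeas {ω | X ω = true}
    (hX (measurableSet_singleton true)) p1 hp1pos G1 hG1 Qu1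
  have hprops1l := cond_cdf_props P Y hYmeas {ω | X ω = true}
    (hX (measurableSet_singleton true)) p1 hp1pos G1 hG1 Ql1
  have hprops0u := cond_cdf_props P Y hYmeas {ω | X ω = false}
    (hX (measurableSet_singleton false)) p0 hp0pos G0 hG0 Qu0
  have hprops0l := cond_cdf_props P Y hYmeas {ω | X ω = false}
    (hX (measurableSet_singleton false)) p0 hp0pos G0 hG0 Ql0
  -- slope comparisons
  have hcc1 : p1 / cu ≤ p1 / cl := by
    rw [div_le_div_iff₀ hcupos hcl]; nlinarith
  have hcc0 : p0 / (1 - cl) ≤ p0 / (1 - cu) := by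
    rw [div_le_div_iff₀ h1cl h1cu]; nlinarith
  -- apply the four jump lemmas
  have Hu1 := min_comp_jump G1 hprops1u.1 Qu1
    ((P {ω | Y ω = Qu1 ∧ X ω = true}).toReal / p1) (by positivity)
    hprops1u.2.1 hprops1u.2.2 (p1 / cl) 0 (p1 / cu) ((cu - p1) / cu)
    (by positivity) (by positivity) Fu1
    (fun y => by rw [hFu1 y]; congr 1 <;> ring)
  have Hl1 := max_comp_jump G1 hprops1l.1 Ql1
    ((P {ω | Y ω = Ql1 ∧ X ω = true}).toReal / p1) (by positivity)
    hprops1l.2.1 hprops1l.2.2 (p1 / cu) 0 (p1 / cl) ((cl - p1) / cl)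
    (by positivity) (by positivity) Fl1
    (fun y => by rw [hFl1 y]; congr 1 <;> ring)
  have Hu0 := min_comp_jump G0 hprops0u.1 Qu0
    ((P {ω | Y ω = Qu0 ∧ X ω = false}).toReal / p0) (by positivity)
    hprops0u.2.1 hprops0u.2.2 (p0 / (1 - cu)) 0 (p0 / (1 - cl)) ((p1 - cl) / (1 - cl))
    (by positivity) (by positivity) Fu0
    (fun y => by rw [hFu0 y]; congr 1 <;> ring)
  have Hl0 := max_comp_jump G0 hprops0l.1 Ql0
    ((P {ω | Y ω = Ql0 ∧ X ω = false}).toReal / p0) (by positivity)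
    hprops0l.2.1 hprops0l.2.2 (p0 / (1 - cl)) 0 (p0 / (1 - cu)) ((p1 - cu) / (1 - cu))
    (by positivity) (by positivity) Fl0
    (fun y => by rw [hFl0 y]; congr 1 <;> ring)
  have hmin1 : min (p1 / cl) (p1 / cu) = p1 / cu := min_eq_right hcc1
  have hmax1 : max (p1 / cl) (p1 / cu) = p1 / cl := max_eq_left hcc1
  have hmin1' : min (p1 / cu) (p1 / cl) = p1 / cu := min_eq_left hcc1
  have hmax1' : max (p1 / cu) (p1 / cl) = p1 / cl := max_eq_right hcc1
  have hmin0 : min (p0 / (1 - cu)) (p0 / (1 - cl)) = p0 / (1 - cl) := min_eq_right hcc0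
  have hmax0 : max (p0 / (1 - cu)) (p0 / (1 - cl)) = p0 / (1 - cu) := max_eq_left hcc0
  have hmin0' : min (p0 / (1 - cl)) (p0 / (1 - cu)) = p0 / (1 - cl) := min_eq_left hcc0
  have hmax0' : max (p0 / (1 - cl)) (p0 / (1 - cu)) = p0 / (1 - cu) := max_eq_right hcc0
  refine ⟨⟨?_, ?_⟩, ⟨?_, ?_⟩, ⟨?_, ?_⟩, ⟨?_, ?_⟩, ?_, ?_, ?_, ?_⟩
  · have := Hu1.1.1; rwa [hmin1] at this
  · have := Hu1.1.2; rwa [hmax1] at this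
  · have := Hl1.1.1; rwa [hmin1'] at this
  · have := Hl1.1.2; rwa [hmax1'] at this
  · have := Hu0.1.1; rwa [hmin0] at this
  · have := Hu0.1.2; rwa [hmax0] at this
  · have := Hl0.1.1; rwa [hmin0'] at this
  · have := Hl0.1.2; rwa [hmax0'] at this
  · exact Hu1.2
  · exact Hl1.2
  · exact Hu0.2
  · exact Hl0.2
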